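/- Unload correctness for RKNL: any reachable terminal configuration of RKNL is of the form ⟨σ, t, []⟩ with t a term in β-normal form, and it decodes to t itself. -/

import Mathlib

set_option autoImplicit false
set_option maxHeartbeats 1000000

namespace RKNL

/- Pure lambda terms over a type of variables. -/
inductive Tm (V : Type) : Type
  | var : V → Tm V
  | app : Tm V → Tm V → Tm V
  | lam : V → Tm V → Tm V
  deriving DecidableEq

abbrev Ident : Type := ℕ
abbrev Loc : Type := ℕ

/-- Lookup in an association list (first match). -/
def lookupL {β : Type} : List (ℕ × β) → ℕ → Option β
  | [], _ => none
  | (a, b) :: l, x => if x = a then some b else lookupL l x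

/-- Update of an association list. -/
def updL {β : Type} (l : List (ℕ × β)) (x : ℕ) (b : β) : List (ℕ × β) :=
  l.map fun p => if p.1 = x then (x, b) else p

/-- Environments map identifiers to store locations. -/
abbrev Env : Type := List (Ident × Loc)

/-- Closures pair a term with an environment. -/
abbrev Closure : Type := Tm Ident × Env

/-- Values: terms (normal forms), or abstraction closures annotated with a location. -/
inductive Value : Type
  | tm : Tm Ident → Value
  | abs : Ident → Tm Ident → Env → Loc → Value
  deriving DecidableEq

/-- Storable values (memothunks):
`pend x t e` is the `todo ⊥` placeholder allocated for the abstraction `(λx.t, e)`,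
`todo c` an unevaluated argument thunk, `done v` a memoized value. -/
inductive Storable : Type
  | pend : Ident → Tm Ident → Env → Storable
  | todo : Closure → Storable
  | done : Value → Storable
  deriving DecidableEq

/-- Stores map locations to storable values. -/
abbrev Store : Type := List (Loc × Storable)

/-- Stack frames: `arg c` is `(□ c)`, `appL t` is `(t □)`, `lamF x` is `λx.□`,
`cache ℓ` is `ℓ := □`. -/
inductive Frame : Type
  | arg : Closure → Frame
  | appL : Tm Ident → Frame
  | lamF : Ident → Frame
  | cache : Loc → Frame
  deriving DecidableEq

abbrev Stack : Type := List Frame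

/-- Machine configurations: evaluation mode `⟨c, s, σ⟩▸` and continue mode `⟨σ, v, s⟩◂`. -/
inductive Conf : Type
  | eval : Closure → Stack → Store → Conf
  | cont : Store → Value → Stack → Conf

/-- The initial configuration loading a term. -/
def Conf.init (t : Tm Ident) : Conf := .eval (t, []) [] []

def Conf.store : Conf → Store
  | .eval _ _ σ => σ
  | .cont σ _ _ => σ

def Conf.stack : Conf → Stack
  | .eval _ s _ => s
  | .cont _ _ s => s

/- Identifiers occurring in a configuration (used for freshness of generated names). -/
def tmVars : Tm Ident → List Ident
  | .var x => [x]
  | .app a b => tmVars a ++ tmVars b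
  | .lam x t => x :: tmVars t

def envVars (e : Env) : List Ident := e.map Prod.fst

def valVars : Value → List Ident
  | .tm t => tmVars t
  | .abs x t e _ => x :: (tmVars t ++ envVars e)

def storableVars : Storable → List Ident
  | .pend x t e => x :: (tmVars t ++ envVars e)
  | .todo c => tmVars c.1 ++ envVars c.2
  | .done v => valVars v

def frameVars : Frame → List Ident
  | .arg c => tmVars c.1 ++ envVars c.2
  | .appL t => tmVars t
  | .lamF x => [x]
  | .cache _ => []

def stackVars (s : Stack) : List Ident := s.foldr (fun f acc => frameVars f ++ acc) []

def storeVars (σ : Store) : List Ident := σ.foldr (fun p acc => storableVars p.2 ++ acc) []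

def confVars : Conf → List Ident
  | .eval c s σ => tmVars c.1 ++ envVars c.2 ++ stackVars s ++ storeVars σ
  | .cont σ v s => valVars v ++ stackVars s ++ storeVars σ

/-- The top of the stack is not an argument frame. -/
def Stack.noArgTop : Stack → Prop
  | Frame.arg _ :: _ => False
  | _ => True

/-- The top of the stack is not a memoization frame. -/
def Stack.noCacheTop : Stack → Prop
  | Frame.cache _ :: _ => False
  | _ => True

/-- The eleven transitions of the RKNL abstract machine, indexed by rule number. -/
inductive Step : ℕ → Conf → Conf → Prop
  | r1 {t1 t2 : Tm Ident} {e : Env} {s : Stack} {σ : Store} :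
      Step 1 (.eval (.app t1 t2, e) s σ) (.eval (t1, e) (.arg (t2, e) :: s) σ)
  | r2 {x : Ident} {t : Tm Ident} {e : Env} {s : Stack} {σ : Store} {ℓ : Loc}
      (h : lookupL σ ℓ = none) :
      Step 2 (.eval (.lam x t, e) s σ) (.cont ((ℓ, .pend x t e) :: σ) (.abs x t e ℓ) s)
  | r3 {x : Ident} {e e2 : Env} {s : Stack} {σ : Store} {ℓ : Loc} {t : Tm Ident}
      (he : lookupL e x = some ℓ) (hσ : lookupL σ ℓ = some (.todo (t, e2))) :
      Step 3 (.eval (.var x, e) s σ) (.eval (t, e2) (.cache ℓ :: s) σ)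
  | r4done {x : Ident} {e : Env} {s : Stack} {σ : Store} {ℓ : Loc} {v : Value}
      (he : lookupL e x = some ℓ) (hσ : lookupL σ ℓ = some (.done v)) :
      Step 4 (.eval (.var x, e) s σ) (.cont σ v s)
  | r4free {x : Ident} {e : Env} {s : Stack} {σ : Store}
      (he : lookupL e x = none) :
      Step 4 (.eval (.var x, e) s σ) (.cont σ (.tm (.var x)) s)
  | r5 {σ : Store} {v : Value} {ℓ : Loc} {s : Stack} :
      Step 5 (.cont σ v (.cache ℓ :: s)) (.cont (updL σ ℓ (.done v)) v s)
  | r6 {σ : Store} {x : Ident} {t t2 : Tm Ident} {e e2 : Env} {ℓ ℓ2 : Loc} {s : Stack}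
      (h : lookupL σ ℓ2 = none) :
      Step 6 (.cont σ (.abs x t e ℓ) (.arg (t2, e2) :: s))
             (.eval (t, (x, ℓ2) :: e) s ((ℓ2, .todo (t2, e2)) :: σ))
  | r7 {σ : Store} {x x' x0 : Ident} {t t0 : Tm Ident} {e e0 : Env} {ℓ ℓ2 : Loc} {s : Stack}
      (hσ : lookupL σ ℓ = some (.pend x0 t0 e0))
      (hs1 : Stack.noArgTop s) (hs2 : Stack.noCacheTop s)
      (hℓ2 : lookupL σ ℓ2 = none)
      (hx' : x' ∉ confVars (.cont σ (.abs x t e ℓ) s)) :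
      Step 7 (.cont σ (.abs x t e ℓ) s)
             (.eval (t, (x, ℓ2) :: e) (.lamF x' :: .cache ℓ :: s)
                    ((ℓ2, .done (.tm (.var x'))) :: σ))
  | r8 {σ : Store} {x : Ident} {t : Tm Ident} {e : Env} {ℓ : Loc} {s : Stack} {v : Value}
      (hσ : lookupL σ ℓ = some (.done v))
      (hs1 : Stack.noArgTop s) (hs2 : Stack.noCacheTop s) :
      Step 8 (.cont σ (.abs x t e ℓ) s) (.cont σ v s)
  | r9 {σ : Store} {t t2 : Tm Ident} {e2 : Env} {s : Stack} :
      Step 9 (.cont σ (.tm t) (.arg (t2, e2) :: s)) (.eval (t2, e2) (.appL t :: s) σ)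
  | r10 {σ : Store} {t1 t2 : Tm Ident} {s : Stack} :
      Step 10 (.cont σ (.tm t2) (.appL t1 :: s)) (.cont σ (.tm (.app t1 t2)) s)
  | r11 {σ : Store} {t : Tm Ident} {x : Ident} {s : Stack} :
      Step 11 (.cont σ (.tm t) (.lamF x :: s)) (.cont σ (.tm (.lam x t)) s)

/-- Reachability by machine transitions. -/
inductive Reach (k0 : Conf) : Conf → Prop
  | refl : Reach k0 k0
  | step {k k' : Conf} {r : ℕ} : Reach k0 k → Step r k k' → Reach k0 k'

/- Generic syntax material used by the decoding: variable renaming of terms,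
one-hole contexts, neutral/normal terms, normal-order contexts,
capture-avoiding substitution, normal-order reduction and α-equivalence. -/

def Tm.mapVar {V V' : Type} (f : V → V') : Tm V → Tm V'
  | .var x => .var (f x)
  | .app a b => .app (Tm.mapVar f a) (Tm.mapVar f b)
  | .lam x t => .lam (f x) (Tm.mapVar f t)

/-- Variables of decoded terms: `Sum.inl x` is an ordinary identifier
(free variables and generated fresh names), `Sum.inr x` is the overlined
(marked) copy `x̄`, taken from a disjoint copy of the set of identifiers. -/
abbrev W : Type := Ident ⊕ Ident

/-- Embedding of machine terms into decoded terms. -/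
def emb (t : Tm Ident) : Tm W := Tm.mapVar Sum.inl t

/-- One-hole contexts. -/
inductive Ctx (V : Type) : Type
  | hole : Ctx V
  | appL : Ctx V → Tm V → Ctx V
  | appR : Tm V → Ctx V → Ctx V
  | lam : V → Ctx V → Ctx V

def Ctx.plug {V : Type} : Ctx V → Tm V → Tm V
  | .hole, t => t
  | .appL C u, t => .app (Ctx.plug C t) u
  | .appR u C, t => .app u (Ctx.plug C t)
  | .lam x C, t => .lam x (Ctx.plug C t)

def Ctx.comp {V : Type} : Ctx V → Ctx V → Ctx V
  | .hole, D => D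
  | .appL C u, D => .appL (Ctx.comp C D) u
  | .appR u C, D => .appR u (Ctx.comp C D)
  | .lam x C, D => .lam x (Ctx.comp C D)

mutual
  inductive Neutral {V : Type} : Tm V → Prop
    | var (x : V) : Neutral (.var x)
    | app {a n : Tm V} : Neutral a → NormalTm n → Neutral (.app a n)
  inductive NormalTm {V : Type} : Tm V → Prop
    | lam {x : V} {t : Tm V} : NormalTm t → NormalTm (.lam x t)
    | neu {a : Tm V} : Neutral a → NormalTm a
end

mutual
  inductive NOCtx {V : Type} : Ctx V → Prop
    | bar {C : Ctx V} : NOBar C → NOCtx C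
    | lam {x : V} {C : Ctx V} : NOCtx C → NOCtx (.lam x C)
  inductive NOBar {V : Type} : Ctx V → Prop
    | hole : NOBar .hole
    | appL {C : Ctx V} {t : Tm V} : NOBar C → NOBar (.appL C t)
    | appR {a : Tm V} {C : Ctx V} : Neutral a → NOCtx C → NOBar (.appR a C)
end

/-- `x` occurs free in a term. -/
inductive FreeIn {V : Type} (x : V) : Tm V → Prop
  | var : FreeIn x (.var x)
  | appL {a b : Tm V} : FreeIn x a → FreeIn x (.app a b)
  | appR {a b : Tm V} : FreeIn x b → FreeIn x (.app a b)
  | lam {y : V} {t : Tm V} : x ≠ y → FreeIn x t → FreeIn x (.lam y t)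

/-- Capture-avoiding substitution `t{x := u}` (as a relation, allowing
α-renaming of binders that would capture variables of `u`). -/
inductive SubstRel {V : Type} : V → Tm V → Tm V → Tm V → Prop
  | var_eq {x : V} {u : Tm V} : SubstRel x u (.var x) u
  | var_ne {x y : V} {u : Tm V} : y ≠ x → SubstRel x u (.var y) (.var y)
  | app {x : V} {u a a' b b' : Tm V} : SubstRel x u a a' → SubstRel x u b b' →
      SubstRel x u (.app a b) (.app a' b')
  | lam_same {x : V} {u t : Tm V} : SubstRel x u (.lam x t) (.lam x t)
  | lam {x y : V} {u t t' : Tm V} : y ≠ x → ¬ FreeIn y u → SubstRel x u t t' →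
      SubstRel x u (.lam y t) (.lam y t')
  | lam_rename {x y z : V} {u t t0 t' : Tm V} : y ≠ x → FreeIn y u →
      z ≠ x → ¬ FreeIn z u → ¬ FreeIn z t →
      SubstRel y (.var z) t t0 → SubstRel x u t0 t' →
      SubstRel x u (.lam y t) (.lam z t')

/-- One step of normal-order reduction: β-contraction in a normal-order context. -/
inductive NOStep {V : Type} : Tm V → Tm V → Prop
  | mk {N : Ctx V} {x : V} {b u r : Tm V} :
      NOCtx N → SubstRel x u b r →
      NOStep (N.plug (.app (.lam x b) u)) (N.plug r)

/-- Correspondence of variables under a list of bound-variable renamings. -/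
inductive AVar {V : Type} : List (V × V) → V → V → Prop
  | nil {x : V} : AVar [] x x
  | here {x y : V} {ρ : List (V × V)} : AVar ((x, y) :: ρ) x y
  | there {x y a b : V} {ρ : List (V × V)} :
      x ≠ a → y ≠ b → AVar ρ x y → AVar ((a, b) :: ρ) x y

/-- α-equivalence up to a list of bound-variable renamings. -/
inductive Alpha {V : Type} : List (V × V) → Tm V → Tm V → Prop
  | var {ρ : List (V × V)} {x y : V} : AVar ρ x y → Alpha ρ (.var x) (.var y)
  | app {ρ : List (V × V)} {a a' b b' : Tm V} :
      Alpha ρ a a' → Alpha ρ b b' → Alpha ρ (.app a b) (.app a' b')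
  | lam {ρ : List (V × V)} {x y : V} {t t' : Tm V} :
      Alpha ((x, y) :: ρ) t t' → Alpha ρ (.lam x t) (.lam y t')

/-- α-equivalence: equality up to renaming of bound variables. -/
def AlphaEq {V : Type} (t t' : Tm V) : Prop := Alpha [] t t'

/-- Subterm relation. -/
inductive Subtm {V : Type} : Tm V → Tm V → Prop
  | refl (t : Tm V) : Subtm t t
  | appL {s a b : Tm V} : Subtm s a → Subtm s (.app a b)
  | appR {s a b : Tm V} : Subtm s b → Subtm s (.app a b)
  | lam {s t : Tm V} {x : V} : Subtm s t → Subtm s (.lam x t)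

def IsRedex {V : Type} (t : Tm V) : Prop := ∃ (x : V) (b u : Tm V), t = .app (.lam x b) u

/-- β-normal form: no subterm is a β-redex. -/
def BetaNormal {V : Type} (t : Tm V) : Prop := ∀ s : Tm V, Subtm s t → ¬ IsRedex s

/- The history-dependent decoding of RKNL configurations. -/

/-- `HistFrom k0 H k` : `H` is the full sequence of configurations (oldest
first) of an execution from `k0` to `k`. -/
inductive HistFrom (k0 : Conf) : List Conf → Conf → Prop
  | refl : HistFrom k0 [k0] k0
  | step {H : List Conf} {k k' : Conf} {r : ℕ} :
      HistFrom k0 H k → Step r k k' → HistFrom k0 (H ++ [k']) k'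

/-- `initOf H ℓ = some (H', sv)` : in the history `H`, location `ℓ` was
initialized with the storable value `sv`, and `H'` is the prefix of the history
up to (and including) the configuration where `ℓ` was initialized. -/
def initOf : List Conf → Loc → Option (List Conf × Storable)
  | [], _ => none
  | k :: H, ℓ =>
    match lookupL (Conf.store k) ℓ with
    | some sv => some ([k], sv)
    | none => Option.map (fun p => (k :: p.1, p.2)) (initOf H ℓ)

/-- Decoding environments: an identifier is mapped either to a store location
(`Sum.inl ℓ`) or to an overlined variable `ȳ` (`Sum.inr y`) introduced when
decoding an abstraction. -/
abbrev DEnv : Type := List (Ident × (Loc ⊕ Ident))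

def embEnv (e : Env) : DEnv := e.map fun p => (p.1, Sum.inl p.2)

/-- Decoding of closures relative to an execution history:
`DecC H t e d` means the closure with term `t` and decoding environment `e`
decodes to the term `d` relative to the history `H`. A variable bound to a
location initialized (by rule 6) with an argument thunk decodes to the decoding
of that thunk at the time of initialization; a variable bound to a location
initialized (by rule 7) with a fresh variable decodes to that variable; an
unbound variable decodes to itself. -/
inductive DecC : List Conf → Tm Ident → DEnv → Tm W → Prop
  | app {H : List Conf} {t1 t2 : Tm Ident} {e : DEnv} {d1 d2 : Tm W} :
      DecC H t1 e d1 → DecC H t2 e d2 → DecC H (.app t1 t2) e (.app d1 d2)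
  | lam {H : List Conf} {x : Ident} {t : Tm Ident} {e : DEnv} {d : Tm W} :
      DecC H t ((x, Sum.inr x) :: e) d → DecC H (.lam x t) e (.lam (Sum.inr x) d)
  | var_bar {H : List Conf} {x y : Ident} {e : DEnv} :
      lookupL e x = some (Sum.inr y) → DecC H (.var x) e (.var (Sum.inr y))
  | var_arg {H H' : List Conf} {x : Ident} {e : DEnv} {ℓ : Loc}
      {t2 : Tm Ident} {e2 : Env} {d : Tm W} :
      lookupL e x = some (Sum.inl ℓ) →
      initOf H ℓ = some (H', .todo (t2, e2)) →
      DecC H' t2 (embEnv e2) d →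
      DecC H (.var x) e d
  | var_fresh {H H' : List Conf} {x x' : Ident} {e : DEnv} {ℓ : Loc} :
      lookupL e x = some (Sum.inl ℓ) →
      initOf H ℓ = some (H', .done (.tm (.var x'))) →
      DecC H (.var x) e (.var (Sum.inl x'))
  | var_free {H : List Conf} {x : Ident} {e : DEnv} :
      lookupL e x = none → DecC H (.var x) e (.var (Sum.inl x))

/-- Decoding of values. -/
inductive DecV : List Conf → Value → Tm W → Prop
  | tm {H : List Conf} {t : Tm Ident} : DecV H (.tm t) (emb t)
  | abs {H : List Conf} {x : Ident} {t : Tm Ident} {e : Env} {ℓ : Loc} {d : Tm W} :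
      DecC H (.lam x t) (embEnv e) d → DecV H (.abs x t e ℓ) d

/-- Decoding of stacks into one-hole contexts (memoization frames are ignored). -/
inductive DecS : List Conf → Stack → Ctx W → Prop
  | nil {H : List Conf} : DecS H [] .hole
  | arg {H : List Conf} {t : Tm Ident} {e : Env} {s : Stack} {C : Ctx W} {d : Tm W} :
      DecS H s C → DecC H t (embEnv e) d →
      DecS H (.arg (t, e) :: s) (C.comp (.appL .hole d))
  | appL {H : List Conf} {t : Tm Ident} {s : Stack} {C : Ctx W} :
      DecS H s C → DecS H (.appL t :: s) (C.comp (.appR (emb t) .hole))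
  | lamF {H : List Conf} {x : Ident} {s : Stack} {C : Ctx W} :
      DecS H s C → DecS H (.lamF x :: s) (C.comp (.lam (Sum.inl x) .hole))
  | cache {H : List Conf} {ℓ : Loc} {s : Stack} {C : Ctx W} :
      DecS H s C → DecS H (.cache ℓ :: s) C

/-- Decoding of configurations: the decoded focus is plugged into the decoded stack. -/
inductive DecK : List Conf → Conf → Tm W → Prop
  | eval {H : List Conf} {t : Tm Ident} {e : Env} {s : Stack} {σ : Store}
      {C : Ctx W} {d : Tm W} :
      DecS H s C → DecC H t (embEnv e) d → DecK H (.eval (t, e) s σ) (C.plug d)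
  | cont {H : List Conf} {σ : Store} {v : Value} {s : Stack} {C : Ctx W} {d : Tm W} :
      DecS H s C → DecV H v d → DecK H (.cont σ v s) (C.plug d)

/- ===== Auxiliary development for unload correctness ===== -/

section Aux

/-- Fresh natural number not in a list. -/
theorem exists_not_mem_list (l : List ℕ) : ∃ x, x ∉ l := by
  obtain ⟨x, hx⟩ := Infinite.exists_notMem_finset l.toFinset
  exact ⟨x, fun h => hx (List.mem_toFinset.mpr h)⟩

theorem lookupL_mem {β : Type} : ∀ {l : List (ℕ × β)} {x : ℕ} {b : β},
    lookupL l x = some b → (x, b) ∈ l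
  | [], _, _, h => by simp [lookupL] at h
  | (a, c) :: l, x, b, h => by
    by_cases hx : x = a
    · subst hx
      simp [lookupL] at h
      subst h
      exact List.mem_cons_self
    · simp [lookupL, hx] at h
      exact List.mem_cons_of_mem _ (lookupL_mem h)

theorem lookupL_none_of_not_mem {β : Type} : ∀ {l : List (ℕ × β)} {x : ℕ},
    x ∉ l.map Prod.fst → lookupL l x = none
  | [], _, _ => rfl
  | (a, c) :: l, x, h => by
    simp only [List.map_cons, List.mem_cons] at h
    push_neg at h
    simp [lookupL, h.1, lookupL_none_of_not_mem h.2]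

theorem exists_fresh {β : Type} (σ : List (ℕ × β)) : ∃ ℓ, lookupL σ ℓ = none := by
  obtain ⟨ℓ, hℓ⟩ := exists_not_mem_list (σ.map Prod.fst)
  exact ⟨ℓ, lookupL_none_of_not_mem hℓ⟩

theorem lookupL_cons_self {β : Type} (σ : List (ℕ × β)) (ℓ : ℕ) (b : β) :
    lookupL ((ℓ, b) :: σ) ℓ = some b := by simp [lookupL]

theorem lookupL_cons_of_some {β : Type} {σ : List (ℕ × β)} {ℓ0 ℓ : ℕ} {sv0 sv : β}
    (hf : lookupL σ ℓ0 = none) (h : lookupL σ ℓ = some sv) :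
    lookupL ((ℓ0, sv0) :: σ) ℓ = some sv := by
  have hne : ℓ ≠ ℓ0 := by rintro rfl; rw [hf] at h; cases h
  simp [lookupL, hne, h]

theorem lookupL_updL {β : Type} : ∀ (l : List (ℕ × β)) (x : ℕ) (b : β) (y : ℕ),
    lookupL (updL l x b) y = (lookupL l y).map (fun c => if y = x then b else c)
  | [], _, _, _ => rfl
  | (a, c) :: l, x, b, y => by
    have tail := lookupL_updL l x b y
    have hcons : updL ((a, c) :: l) x b
        = (if a = x then (x, b) else (a, c)) :: updL l x b := rfl
    rw [hcons]
    by_cases hax : a = x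
    · rw [if_pos hax]
      subst hax
      by_cases hy : y = a
      · subst hy; simp [lookupL]
      · simp [lookupL, hy, tail]
    · rw [if_neg hax]
      by_cases hy : y = a
      · subst hy; simp [lookupL, hax]
      · simp [lookupL, hy, tail]

/-! ### Shape classification of storables -/

def IsLamNF (t : Tm Ident) : Prop := NormalTm t ∧ ∃ x u, t = .lam x u

def ShapeA : Storable → Prop
  | .todo _ => True
  | .done (.tm a) => Neutral a
  | .done (.abs _ _ _ _) => True
  | .pend _ _ _ => False

def ShapeB : Storable → Prop
  | .pend _ _ _ => True
  | .done (.tm t) => IsLamNF t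
  | _ => False

theorem Neutral_not_lam {V : Type} {a : Tm V} (h : Neutral a) :
    ∀ x t, a ≠ .lam x t := by
  cases h <;> simp

theorem shapeA_shapeB_false {sv : Storable} (hA : ShapeA sv) (hB : ShapeB sv) : False := by
  cases sv with
  | pend x t e => exact hA
  | todo c => exact hB
  | done v =>
    cases v with
    | tm t =>
      obtain ⟨x, u, rfl⟩ := hB.2
      exact (Neutral_not_lam hA x u) rfl
    | abs x t e ℓ => exact hB

def ClassA (σ : Store) (ℓ : Loc) : Prop := ∃ sv, lookupL σ ℓ = some sv ∧ ShapeA sv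
def ClassB (σ : Store) (ℓ : Loc) : Prop := ∃ sv, lookupL σ ℓ = some sv ∧ ShapeB sv

theorem classA_classB_false {σ : Store} {ℓ : Loc} (hA : ClassA σ ℓ) (hB : ClassB σ ℓ) :
    False := by
  obtain ⟨sa, ha, hsa⟩ := hA
  obtain ⟨sb, hb, hsb⟩ := hB
  rw [ha] at hb
  cases hb
  exact shapeA_shapeB_false hsa hsb

def EnvOK (σ : Store) (e : Env) : Prop := ∀ x ℓ, lookupL e x = some ℓ → ClassA σ ℓ

def VOK (σ : Store) : Value → Prop
  | .tm t => NormalTm t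
  | .abs _ _ e ℓ => EnvOK σ e ∧ ClassB σ ℓ

def SvOK (σ : Store) : Storable → Prop
  | .pend _ _ e => EnvOK σ e
  | .todo c => EnvOK σ c.2
  | .done v => VOK σ v

def StoreOK (σ : Store) : Prop := ∀ p ∈ σ, SvOK σ p.2

def NoB (σ : Store) : Stack → Prop
  | .cache ℓ :: _ => ClassA σ ℓ
  | _ => True

def Calm (s : Stack) : Prop := Stack.noArgTop s ∧ Stack.noCacheTop s

def StkOK (σ : Store) : Stack → Prop
  | [] => True
  | .arg c :: s => EnvOK σ c.2 ∧ NoB σ s ∧ StkOK σ s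
  | .appL t :: s => Neutral t ∧ NoB σ s ∧ StkOK σ s
  | .lamF _ :: s => (∃ ℓ s', s = .cache ℓ :: s' ∧ ClassB σ ℓ) ∧ StkOK σ s
  | .cache ℓ :: s => ((ClassA σ ℓ ∧ NoB σ s) ∨ (ClassB σ ℓ ∧ Calm s)) ∧ StkOK σ s

def ArgV : Value → Prop
  | .tm t => Neutral t
  | .abs _ _ _ _ => True

def Inv : Conf → Prop
  | .eval c s σ => StoreOK σ ∧ EnvOK σ c.2 ∧ StkOK σ s ∧ NoB σ s
  | .cont σ v s => StoreOK σ ∧ StkOK σ s ∧ VOK σ v ∧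
      (∀ c s', s = .arg c :: s' → ArgV v) ∧
      (∀ ℓ s', s = .cache ℓ :: s' → ClassA σ ℓ → ArgV v) ∧
      (∀ ℓ s', s = .cache ℓ :: s' → ClassB σ ℓ → ∃ t, v = .tm t ∧ IsLamNF t)

end Aux
section Mono

variable {σ : Store} {ℓ0 : Loc} {sv0 : Storable} (hf : lookupL σ ℓ0 = none)

include hf

theorem ClassA_mono {ℓ : Loc} (h : ClassA σ ℓ) : ClassA ((ℓ0, sv0) :: σ) ℓ := by
  obtain ⟨sv, hl, hs⟩ := h
  exact ⟨sv, lookupL_cons_of_some hf hl, hs⟩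

theorem ClassB_mono {ℓ : Loc} (h : ClassB σ ℓ) : ClassB ((ℓ0, sv0) :: σ) ℓ := by
  obtain ⟨sv, hl, hs⟩ := h
  exact ⟨sv, lookupL_cons_of_some hf hl, hs⟩

theorem EnvOK_mono {e : Env} (h : EnvOK σ e) : EnvOK ((ℓ0, sv0) :: σ) e :=
  fun x ℓ hx => ClassA_mono hf (h x ℓ hx)

theorem VOK_mono {v : Value} (h : VOK σ v) : VOK ((ℓ0, sv0) :: σ) v := by
  cases v with
  | tm t => exact h
  | abs x t e ℓ => exact ⟨EnvOK_mono hf h.1, ClassB_mono hf h.2⟩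

theorem SvOK_mono {sv : Storable} (h : SvOK σ sv) : SvOK ((ℓ0, sv0) :: σ) sv := by
  cases sv with
  | pend x t e => exact EnvOK_mono hf h
  | todo c => exact EnvOK_mono hf h
  | done v => exact VOK_mono hf h

theorem NoB_mono {s : Stack} (h : NoB σ s) : NoB ((ℓ0, sv0) :: σ) s := by
  cases s with
  | nil => trivial
  | cons f s =>
    cases f with
    | cache ℓ => exact ClassA_mono hf h
    | arg c => trivial
    | appL t => trivial
    | lamF x => trivial

theorem StkOK_mono : ∀ {s : Stack}, StkOK σ s → StkOK ((ℓ0, sv0) :: σ) s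
  | [], _ => trivial
  | .arg c :: s, h => ⟨EnvOK_mono hf h.1, NoB_mono hf h.2.1, StkOK_mono h.2.2⟩
  | .appL t :: s, h => ⟨h.1, NoB_mono hf h.2.1, StkOK_mono h.2.2⟩
  | .lamF x :: s, h => by
    obtain ⟨⟨ℓ, s', rfl, hB⟩, h2⟩ := h
    exact ⟨⟨ℓ, s', rfl, ClassB_mono hf hB⟩, StkOK_mono h2⟩
  | .cache ℓ :: s, h => by
    rcases h with ⟨hAB | hBC, h2⟩
    · exact ⟨Or.inl ⟨ClassA_mono hf hAB.1, NoB_mono hf hAB.2⟩, StkOK_mono h2⟩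
    · exact ⟨Or.inr ⟨ClassB_mono hf hBC.1, hBC.2⟩, StkOK_mono h2⟩

theorem StoreOK_cons (h : StoreOK σ) (hnew : SvOK ((ℓ0, sv0) :: σ) sv0) :
    StoreOK ((ℓ0, sv0) :: σ) := by
  intro p hp
  rcases List.mem_cons.mp hp with rfl | hp
  · exact hnew
  · exact SvOK_mono hf (h p hp)

end Mono

section Upd

theorem lookupL_updL_eq {σ : Store} {ℓ0 : Loc} {sv0 sv1 : Storable}
    (h0 : lookupL σ ℓ0 = some sv0) (ℓ : Loc) :
    lookupL (updL σ ℓ0 sv1) ℓ = if ℓ = ℓ0 then some sv1 else lookupL σ ℓ := by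
  rw [lookupL_updL]
  by_cases hℓ : ℓ = ℓ0
  · subst hℓ; rw [h0]; simp
  · simp only [if_neg hℓ]
    cases lookupL σ ℓ <;> simp [hℓ]

variable {σ : Store} {ℓ0 : Loc} {sv0 sv1 : Storable}
  (h0 : lookupL σ ℓ0 = some sv0)
  (hA : ShapeA sv0 → ShapeA sv1) (hB : ShapeB sv0 → ShapeB sv1)

set_option linter.unusedSectionVars false

include h0 hA hB

theorem ClassA_upd {ℓ : Loc} (h : ClassA σ ℓ) : ClassA (updL σ ℓ0 sv1) ℓ := by
  obtain ⟨sv, hl, hs⟩ := h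
  by_cases hℓ : ℓ = ℓ0
  · subst hℓ
    rw [h0] at hl; cases hl
    exact ⟨sv1, by rw [lookupL_updL_eq h0]; simp, hA hs⟩
  · exact ⟨sv, by rw [lookupL_updL_eq h0]; simp [hℓ, hl], hs⟩

theorem ClassB_upd {ℓ : Loc} (h : ClassB σ ℓ) : ClassB (updL σ ℓ0 sv1) ℓ := by
  obtain ⟨sv, hl, hs⟩ := h
  by_cases hℓ : ℓ = ℓ0
  · subst hℓ
    rw [h0] at hl; cases hl
    exact ⟨sv1, by rw [lookupL_updL_eq h0]; simp, hB hs⟩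
  · exact ⟨sv, by rw [lookupL_updL_eq h0]; simp [hℓ, hl], hs⟩

theorem EnvOK_upd {e : Env} (h : EnvOK σ e) : EnvOK (updL σ ℓ0 sv1) e :=
  fun x ℓ hx => ClassA_upd h0 hA hB (h x ℓ hx)

theorem VOK_upd {v : Value} (h : VOK σ v) : VOK (updL σ ℓ0 sv1) v := by
  cases v with
  | tm t => exact h
  | abs x t e ℓ => exact ⟨EnvOK_upd h0 hA hB h.1, ClassB_upd h0 hA hB h.2⟩

theorem SvOK_upd {sv : Storable} (h : SvOK σ sv) : SvOK (updL σ ℓ0 sv1) sv := by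
  cases sv with
  | pend x t e => exact EnvOK_upd h0 hA hB h
  | todo c => exact EnvOK_upd h0 hA hB h
  | done v => exact VOK_upd h0 hA hB h

theorem NoB_upd {s : Stack} (h : NoB σ s) : NoB (updL σ ℓ0 sv1) s := by
  cases s with
  | nil => trivial
  | cons f s =>
    cases f with
    | cache ℓ => exact ClassA_upd h0 hA hB h
    | arg c => trivial
    | appL t => trivial
    | lamF x => trivial

theorem StkOK_upd : ∀ {s : Stack}, StkOK σ s → StkOK (updL σ ℓ0 sv1) s
  | [], _ => trivial
  | .arg c :: s, h => ⟨EnvOK_upd h0 hA hB h.1, NoB_upd h0 hA hB h.2.1, StkOK_upd h.2.2⟩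
  | .appL t :: s, h => ⟨h.1, NoB_upd h0 hA hB h.2.1, StkOK_upd h.2.2⟩
  | .lamF x :: s, h => by
    obtain ⟨⟨ℓ, s', rfl, hBc⟩, h2⟩ := h
    exact ⟨⟨ℓ, s', rfl, ClassB_upd h0 hA hB hBc⟩, StkOK_upd h2⟩
  | .cache ℓ :: s, h => by
    rcases h with ⟨hAB | hBC, h2⟩
    · exact ⟨Or.inl ⟨ClassA_upd h0 hA hB hAB.1, NoB_upd h0 hA hB hAB.2⟩, StkOK_upd h2⟩
    · exact ⟨Or.inr ⟨ClassB_upd h0 hA hB hBC.1, hBC.2⟩, StkOK_upd h2⟩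

theorem StoreOK_upd (h : StoreOK σ) (hnew : SvOK (updL σ ℓ0 sv1) sv1) :
    StoreOK (updL σ ℓ0 sv1) := by
  intro p hp
  obtain ⟨q, hq, hpq⟩ := List.mem_map.mp hp
  by_cases hq1 : q.1 = ℓ0
  · rw [if_pos hq1] at hpq
    subst hpq
    exact hnew
  · rw [if_neg hq1] at hpq
    subst hpq
    exact SvOK_upd h0 hA hB (h q hq)

end Upd
theorem StoreOK_lookup {σ : Store} {ℓ : Loc} {sv : Storable}
    (h : StoreOK σ) (hl : lookupL σ ℓ = some sv) : SvOK σ sv :=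
  h _ (lookupL_mem hl)

theorem inv_init (t0 : Tm Ident) : Inv (Conf.init t0) := by
  refine ⟨fun p hp => absurd hp List.not_mem_nil, ?_, trivial, trivial⟩
  intro x ℓ hx
  simp [lookupL] at hx

theorem inv_step {r : ℕ} {k k' : Conf} (hI : Inv k) (hs : Step r k k') : Inv k' := by
  cases hs with
  | @r1 t1 t2 e s σ =>
    obtain ⟨h1, h2, h3, h4⟩ := hI
    exact ⟨h1, h2, ⟨h2, h4, h3⟩, trivial⟩
  | @r2 x t e s σ ℓ hfr =>
    obtain ⟨h1, h2, h3, h4⟩ := hI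
    refine ⟨StoreOK_cons hfr h1 (EnvOK_mono hfr h2), StkOK_mono hfr h3,
      ⟨EnvOK_mono hfr h2, ⟨_, lookupL_cons_self σ ℓ _, trivial⟩⟩, ?_, ?_, ?_⟩
    · intro c s' _; trivial
    · intro ℓ' s' _ _; trivial
    · rintro ℓ' s' rfl hBc
      exact absurd hBc fun hBc => classA_classB_false (ClassA_mono hfr h4) hBc
  | @r3 x e e2 s σ ℓ t he hσ =>
    obtain ⟨h1, h2, h3, h4⟩ := hI
    have hcA : ClassA σ ℓ := ⟨_, hσ, trivial⟩
    have he2 : EnvOK σ e2 := StoreOK_lookup h1 hσ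
    exact ⟨h1, he2, ⟨Or.inl ⟨hcA, h4⟩, h3⟩, hcA⟩
  | @r4done x e s σ ℓ v he hσ =>
    obtain ⟨h1, h2, h3, h4⟩ := hI
    obtain ⟨sv, hl, hshape⟩ := h2 x ℓ he
    rw [hσ] at hl; cases hl
    have hargv : ArgV v := by cases v with
      | tm t => exact hshape
      | abs => trivial
    refine ⟨h1, h3, StoreOK_lookup h1 hσ, fun _ _ _ => hargv, fun _ _ _ _ => hargv, ?_⟩
    rintro ℓ' s' rfl hBc
    exact absurd hBc fun hBc => classA_classB_false h4 hBc
  | @r4free x e s σ he =>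
    obtain ⟨h1, h2, h3, h4⟩ := hI
    refine ⟨h1, h3, NormalTm.neu (Neutral.var x), fun _ _ _ => Neutral.var x,
      fun _ _ _ _ => Neutral.var x, ?_⟩
    rintro ℓ' s' rfl hBc
    exact absurd hBc fun hBc => classA_classB_false h4 hBc
  | @r5 σ v ℓ s =>
    obtain ⟨h1, h2, h3, h4, h5, h6⟩ := hI
    obtain ⟨hor, hstk⟩ := h2
    rcases hor with ⟨hcA, hnbs⟩ | ⟨hcB, hcalm⟩
    · -- class A cache
      obtain ⟨sv0, h0, hsA⟩ := hcA
      have hargv : ArgV v := h5 ℓ s rfl ⟨sv0, h0, hsA⟩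
      have hA' : ShapeA sv0 → ShapeA (Storable.done v) := by
        intro _; cases v with
        | tm t => exact hargv
        | abs => trivial
      have hB' : ShapeB sv0 → ShapeB (Storable.done v) :=
        fun hb => absurd hb fun hb => shapeA_shapeB_false hsA hb
      refine ⟨StoreOK_upd h0 hA' hB' h1 (VOK_upd h0 hA' hB' h3),
        StkOK_upd h0 hA' hB' hstk, VOK_upd h0 hA' hB' h3,
        fun _ _ _ => hargv, fun _ _ _ _ => hargv, ?_⟩
      rintro ℓ' s' rfl hBc
      have hcA' : ClassA (updL σ ℓ (Storable.done v)) ℓ' :=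
        ClassA_upd h0 hA' hB' hnbs
      exact absurd hBc fun hBc => classA_classB_false hcA' hBc
    · -- class B cache
      obtain ⟨sv0, h0, hsB⟩ := hcB
      obtain ⟨t, rfl, hlnf⟩ := h6 ℓ s rfl ⟨sv0, h0, hsB⟩
      have hA' : ShapeA sv0 → ShapeA (Storable.done (Value.tm t)) :=
        fun ha => absurd ha fun ha => shapeA_shapeB_false ha hsB
      have hB' : ShapeB sv0 → ShapeB (Storable.done (Value.tm t)) := fun _ => hlnf
      refine ⟨StoreOK_upd h0 hA' hB' h1 hlnf.1, StkOK_upd h0 hA' hB' hstk, hlnf.1,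
        ?_, ?_, ?_⟩
      · rintro c s' rfl; exact absurd hcalm.1 id
      · rintro ℓ' s' rfl _; exact absurd hcalm.2 id
      · rintro ℓ' s' rfl _; exact absurd hcalm.2 id
  | @r6 σ x t t2 e e2 ℓ ℓ2 s hfr =>
    obtain ⟨h1, h2, h3, h4, h5, h6⟩ := hI
    obtain ⟨he2, hnbs, hstk⟩ := h2
    obtain ⟨he, hcB⟩ := h3
    refine ⟨StoreOK_cons hfr h1 (EnvOK_mono hfr he2), ?_, StkOK_mono hfr hstk,
      NoB_mono hfr hnbs⟩
    intro y ℓ' hy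
    by_cases hyx : y = x
    · subst hyx
      simp [lookupL] at hy
      subst hy
      exact ⟨_, lookupL_cons_self σ ℓ2 _, trivial⟩
    · simp [lookupL, hyx] at hy
      exact ClassA_mono hfr (he y ℓ' hy)
  | @r7 σ x x' x0 t t0 e e0 ℓ ℓ2 s hσ hs1 hs2 hfr hx' =>
    obtain ⟨h1, h2, h3, h4, h5, h6⟩ := hI
    obtain ⟨he, hcB⟩ := h3
    have hvar : SvOK ((ℓ2, Storable.done (Value.tm (Tm.var x'))) :: σ)
        (Storable.done (Value.tm (Tm.var x'))) := NormalTm.neu (Neutral.var x')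
    refine ⟨StoreOK_cons hfr h1 hvar, ?_, ?_, trivial⟩
    · intro y ℓ' hy
      by_cases hyx : y = x
      · subst hyx
        simp [lookupL] at hy
        subst hy
        exact ⟨_, lookupL_cons_self σ ℓ2 _, Neutral.var x'⟩
      · simp [lookupL, hyx] at hy
        exact ClassA_mono hfr (he y ℓ' hy)
    · exact ⟨⟨ℓ, s, rfl, ClassB_mono hfr hcB⟩,
        ⟨Or.inr ⟨ClassB_mono hfr hcB, hs1, hs2⟩, StkOK_mono hfr h2⟩⟩
  | @r8 σ x t e ℓ s v hσ hs1 hs2 =>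
    obtain ⟨h1, h2, h3, h4, h5, h6⟩ := hI
    refine ⟨h1, h2, StoreOK_lookup h1 hσ, ?_, ?_, ?_⟩
    · rintro c s' rfl; exact absurd hs1 id
    · rintro ℓ' s' rfl _; exact absurd hs2 id
    · rintro ℓ' s' rfl _; exact absurd hs2 id
  | @r9 σ t t2 e2 s =>
    obtain ⟨h1, h2, h3, h4, h5, h6⟩ := hI
    obtain ⟨he2, hnbs, hstk⟩ := h2
    exact ⟨h1, he2, ⟨h4 _ _ rfl, hnbs, hstk⟩, trivial⟩
  | @r10 σ t1 t2 s =>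
    obtain ⟨h1, h2, h3, h4, h5, h6⟩ := hI
    obtain ⟨hn1, hnbs, hstk⟩ := h2
    have hneu : Neutral (Tm.app t1 t2) := Neutral.app hn1 h3
    refine ⟨h1, hstk, NormalTm.neu hneu, fun _ _ _ => hneu, fun _ _ _ _ => hneu, ?_⟩
    rintro ℓ' s' rfl hBc
    exact absurd hBc fun hBc => classA_classB_false hnbs hBc
  | @r11 σ t x s =>
    obtain ⟨h1, h2, h3, h4, h5, h6⟩ := hI
    obtain ⟨⟨ℓ, s', heq, hcB⟩, hstk⟩ := h2
    subst heq
    refine ⟨h1, hstk, NormalTm.lam h3, ?_, ?_, ?_⟩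
    · rintro c s'' heq; cases heq
    · rintro ℓ'' s'' heq hcA
      cases heq
      exact absurd hcA fun hcA => classA_classB_false hcA hcB
    · rintro ℓ'' s'' heq _
      cases heq
      exact ⟨_, rfl, NormalTm.lam h3, x, t, rfl⟩
theorem inv_reach {t0 : Tm Ident} {H : List Conf} {k : Conf}
    (h : HistFrom (Conf.init t0) H k) : Inv k := by
  induction h with
  | refl => exact inv_init t0
  | step _ hs ih => exact inv_step ih hs

theorem terminal_shape {k : Conf} (hI : Inv k)
    (hterm : ∀ (r : ℕ) (k' : Conf), ¬ Step r k k') :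
    ∃ (σ : Store) (t : Tm Ident), k = .cont σ (.tm t) [] ∧ NormalTm t := by
  cases k with
  | eval c s σ =>
    exfalso
    obtain ⟨t, e⟩ := c
    obtain ⟨h1, h2, h3, h4⟩ := hI
    cases t with
    | app t1 t2 => exact hterm 1 _ Step.r1
    | lam x t =>
      obtain ⟨ℓ, hℓ⟩ := exists_fresh σ
      exact hterm 2 _ (Step.r2 hℓ)
    | var x =>
      cases he : lookupL e x with
      | none => exact hterm 4 _ (Step.r4free he)
      | some ℓ =>
        obtain ⟨sv, hl, hshape⟩ := h2 x ℓ he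
        cases sv with
        | pend x0 t0 e0 => exact hshape
        | todo c =>
          obtain ⟨t2, e2⟩ := c
          exact hterm 3 _ (Step.r3 he hl)
        | done v => exact hterm 4 _ (Step.r4done he hl)
  | cont σ v s =>
    obtain ⟨h1, h2, h3, h4, h5, h6⟩ := hI
    have habs : ∀ x t e ℓ, v = Value.abs x t e ℓ → Stack.noArgTop s →
        Stack.noCacheTop s → False := by
      rintro x t e ℓ rfl hna hnc
      obtain ⟨hEnv, sv, hl, hshape⟩ := h3
      cases sv with
      | pend x0 t0 e0 =>
        obtain ⟨ℓ2, hℓ2⟩ := exists_fresh σ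
        obtain ⟨x', hx'⟩ := exists_not_mem_list
          (confVars (Conf.cont σ (Value.abs x t e ℓ) s))
        exact hterm 7 _ (Step.r7 hl hna hnc hℓ2 hx')
      | todo c => exact hshape
      | done v' =>
        cases v' with
        | tm t' => exact hterm 8 _ (Step.r8 hl hna hnc)
        | abs => exact hshape
    cases s with
    | nil =>
      cases v with
      | tm t => exact ⟨σ, t, rfl, h3⟩
      | abs x t e ℓ => exact absurd (habs x t e ℓ rfl trivial trivial) id
    | cons f s' =>
      exfalso
      cases f with
      | cache ℓ => exact hterm 5 _ Step.r5
      | arg c =>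
        obtain ⟨t2, e2⟩ := c
        cases v with
        | tm t => exact hterm 9 _ Step.r9
        | abs x t e ℓ =>
          obtain ⟨ℓ2, hℓ2⟩ := exists_fresh σ
          exact hterm 6 _ (Step.r6 hℓ2)
      | appL t1 =>
        cases v with
        | tm t => exact hterm 10 _ Step.r10
        | abs x t e ℓ => exact habs x t e ℓ rfl trivial trivial
      | lamF x' =>
        cases v with
        | tm t => exact hterm 11 _ Step.r11
        | abs x t e ℓ => exact habs x t e ℓ rfl trivial trivial

/-! ### Normal terms are β-normal -/

theorem normal_beta {V : Type} : ∀ t : Tm V,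
    (NormalTm t → BetaNormal t) ∧ (Neutral t → BetaNormal t) := by
  intro t
  induction t with
  | var x =>
    have : BetaNormal (Tm.var x : Tm V) := by
      intro s hs hr
      cases hs
      obtain ⟨y, b, u, he⟩ := hr
      cases he
    exact ⟨fun _ => this, fun _ => this⟩
  | app a b iha ihb =>
    have hneu : Neutral (Tm.app a b) → BetaNormal (Tm.app a b) := by
      intro h
      cases h with
      | app ha hb =>
        intro s hs hr
        cases hs with
        | refl =>
          obtain ⟨y, b', u, he⟩ := hr
          cases he
          exact (Neutral_not_lam ha _ _) rfl
        | appL h' => exact iha.2 ha s h' hr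
        | appR h' => exact ihb.1 hb s h' hr
    refine ⟨fun h => ?_, hneu⟩
    cases h with
    | neu hn => exact hneu hn
  | lam x t ih =>
    have hnor : NormalTm (Tm.lam x t) → BetaNormal (Tm.lam x t) := by
      intro h
      have ht : NormalTm t := by
        cases h with
        | lam h => exact h
        | neu hn => cases hn
      intro s hs hr
      cases hs with
      | refl =>
        obtain ⟨y, b', u, he⟩ := hr
        cases he
      | lam h' => exact ih.1 ht s h' hr
    exact ⟨hnor, fun hn => by cases hn⟩

/-- Unload correctness: any reachable terminal configuration of RKNL is of the
form `⟨σ, t, []⟩` with `t` a term in β-normal form, and it decodes to `t` itself. -/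
theorem unload_correctness {t0 : Tm Ident} {H : List Conf} {k : Conf}
    (h : HistFrom (Conf.init t0) H k)
    (hterm : ∀ (r : ℕ) (k' : Conf), ¬ Step r k k') :
    ∃ (σ : Store) (t : Tm Ident),
      k = .cont σ (.tm t) [] ∧ BetaNormal t ∧
      ∀ d : Tm W, DecK H k d → d = emb t := by
  obtain ⟨σ, t, rfl, hnorm⟩ := terminal_shape (inv_reach h) hterm
  refine ⟨σ, t, rfl, (normal_beta t).1 hnorm, ?_⟩
  intro d hd
  cases hd with
  | cont hS hV =>
    cases hS
    cases hV
    rfl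

end RKNL
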